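/- arXiv:2109.06701 — 2 statements merged into one kernel-verified Lean document; each statement's English description precedes it below -/
import Mathlib

section
/- The Stieltjes transform m(z) of the semicircle law with density (1/(2π))√(4−x²) on [−2,2] satisfies the equation m(z) = −1/(z + m(z)) for all z in the upper half plane. -/
open Complex

lemma exists_small_root (z : ℂ) (hz : 0 < z.im) :
    ∃ s : ℂ, s ^ 2 + z * s + 1 = 0 ∧ ‖s‖ < 1 := by
  obtain ⟨w, hw⟩ : ∃ w : ℂ, w ^ 2 = z ^ 2 - 4 :=
    ⟨(z ^ 2 - 4) ^ (((2 : ℕ) : ℂ)⁻¹), Complex.cpow_nat_inv_pow _ two_ne_zero⟩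
  set s₁ : ℂ := (-z + w) / 2 with hs₁
  set s₂ : ℂ := (-z - w) / 2 with hs₂
  have hq1 : s₁ ^ 2 + z * s₁ + 1 = 0 := by rw [hs₁]; linear_combination hw / 4
  have hq2 : s₂ ^ 2 + z * s₂ + 1 = 0 := by rw [hs₂]; linear_combination hw / 4
  have hprod : s₁ * s₂ = 1 := by rw [hs₁, hs₂]; linear_combination (-1 : ℂ) / 4 * hw
  have habs : ‖s₁‖ * ‖s₂‖ = 1 := by
    rw [← norm_mul, hprod, norm_one]
  rcases lt_trichotomy ‖s₁‖ 1 with h | h | h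
  · exact ⟨s₁, hq1, h⟩
  · exfalso
    have hs10 : s₁ ≠ 0 := by
      intro h0
      rw [h0, zero_mul] at hprod
      exact one_ne_zero hprod.symm
    have hinv : s₂ = s₁⁻¹ := by
      field_simp
      linear_combination hprod
    have hc : s₁⁻¹ = starRingEnd ℂ s₁ := Complex.inv_eq_conj h
    have hsum : z = -(s₁ + s₂) := by rw [hs₁, hs₂]; ring
    have : z.im = 0 := by
      rw [hsum, hinv, hc]
      simp
    linarith
  · refine ⟨s₂, hq2, ?_⟩
    nlinarith [norm_nonneg s₂]

open Complex

lemma semicircle_integral (z s : ℂ) (hz : 0 < z.im)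
    (hq : s ^ 2 + z * s + 1 = 0) (hs1 : ‖s‖ < 1) :
    (∫ x in (-2:ℝ)..2,
      ((Real.sqrt (4 - x ^ 2) / (2 * Real.pi) : ℝ) : ℂ) / ((x : ℂ) - z)) = s := by
  have hs0 : s ≠ 0 := by
    intro h0; rw [h0] at hq; simp at hq
  have hπ : (Real.pi : ℂ) ≠ 0 := by simpa using Real.pi_ne_zero
  have hzeq : z = (-1 - s ^ 2) / s := by
    field_simp
    linear_combination hq
  have hsub : ∀ x : ℝ, (x : ℂ) - z ≠ 0 := by
    intro x h
    have := congrArg Complex.im h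
    simp at this
    linarith
  set ρ : ℝ → ℂ := fun x =>
    ((Real.sqrt (4 - x ^ 2) / (2 * Real.pi) : ℝ) : ℂ) / ((x : ℂ) - z) with hρ
  have hρc : Continuous ρ := by
    apply Continuous.div
    · exact Complex.continuous_ofReal.comp
        ((Real.continuous_sqrt.comp (by continuity)).div_const _)
    · exact (Complex.continuous_ofReal).sub continuous_const
    · exact hsub
  have hder : ∀ θ ∈ Set.uIcc (0:ℝ) Real.pi,
      HasDerivAt (fun t : ℝ => 2 * Real.cos t) (-2 * Real.sin θ) θ := by
    intro θ _
    simpa [mul_comm] using (Real.hasDerivAt_cos θ).const_mul 2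
  have hsubst : (∫ θ in (0:ℝ)..Real.pi, (-2 * Real.sin θ) • ρ (2 * Real.cos θ))
      = ∫ x in (2:ℝ)..(-2), ρ x := by
    have := intervalIntegral.integral_comp_smul_deriv hder
      (by continuity : Continuous fun θ : ℝ => -2 * Real.sin θ).continuousOn hρc
    simpa [Function.comp, Real.cos_pi] using this
  set E : ℝ → ℂ := fun θ => Complex.exp (θ * I) with hE
  have hEabs : ∀ θ : ℝ, ‖E θ‖ = 1 := fun θ => Complex.norm_exp_ofReal_mul_I θ
  have hE0 : ∀ θ : ℝ, E θ ≠ 0 := fun θ => Complex.exp_ne_zero _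
  have hplus : ∀ θ : ℝ, 1 + s * E θ ∈ Complex.slitPlane := by
    intro θ
    apply Complex.mem_slitPlane_of_norm_lt_one
    rw [norm_mul]
    calc ‖s‖ * ‖E θ‖ = ‖s‖ := by
          rw [hEabs θ, mul_one]
      _ < 1 := hs1
  have hplus0 : ∀ θ : ℝ, 1 + s * E θ ≠ 0 := fun θ => Complex.slitPlane_ne_zero (hplus θ)
  have hcosz : ∀ θ : ℝ, 2 * (Real.cos θ : ℂ) - z ≠ 0 := by
    intro θ h
    have := congrArg Complex.im h
    simp at this
    linarith
  set H : ℝ → ℂ := fun θ =>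
    -2 * (Real.sin θ : ℂ) - z * θ
      + (1 - s ^ 2) * (I / s) * Complex.log (1 + s * E (-θ))
      + (s - 1 / s) * ((θ : ℂ) + I * Complex.log (1 + s * E θ)) with hH
  set F : ℝ → ℂ := fun θ =>
    4 * (Real.sin θ : ℂ) ^ 2 / (2 * (Real.cos θ : ℂ) - z) with hF
  have hderivH : ∀ θ : ℝ, HasDerivAt H (F θ) θ := by
    intro θ
    have hid : HasDerivAt (fun t : ℝ => (t : ℂ)) 1 θ := by
      simpa using (hasDerivAt_id θ).ofReal_comp
    have hEd : HasDerivAt (fun t : ℝ => E t) (I * E θ) θ := by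
      have : HasDerivAt (fun w : ℂ => Complex.exp (w * I)) (Complex.exp (θ * I) * I) θ := by
        simpa using ((hasDerivAt_id (θ:ℂ)).mul_const I).cexp
      simpa [hE, mul_comm] using this.comp_ofReal
    have hEnd : HasDerivAt (fun t : ℝ => E (-t)) (-I * E (-θ)) θ := by
      have h2 : HasDerivAt (fun y : ℝ => Complex.exp (-(y:ℂ) * I))
          (Complex.exp (-(θ:ℂ) * I) * -I) θ := by
        simpa using (((hasDerivAt_id (θ:ℂ)).neg.mul_const I).cexp).comp_ofReal
      simp only [hE, Complex.ofReal_neg]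
      simpa [mul_comm] using h2
    have hlogp : HasDerivAt (fun t : ℝ => Complex.log (1 + s * E t))
        ((s * (I * E θ)) / (1 + s * E θ)) θ :=
      HasDerivAt.clog_real ((hEd.const_mul s).const_add 1) (hplus θ)
    have hlogm : HasDerivAt (fun t : ℝ => Complex.log (1 + s * E (-t)))
        ((s * (-I * E (-θ))) / (1 + s * E (-θ))) θ :=
      HasDerivAt.clog_real ((hEnd.const_mul s).const_add 1) (hplus (-θ))
    have hsin : HasDerivAt (fun t : ℝ => -2 * (Real.sin t : ℂ))
        (-2 * (Real.cos θ : ℂ)) θ := by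
      simpa using ((Real.hasDerivAt_sin θ).ofReal_comp).const_mul (-2 : ℂ)
    have big := ((hsin.sub (hid.const_mul z)).add
        (hlogm.const_mul ((1 - s ^ 2) * (I / s)))).add
        ((hid.add (hlogp.const_mul I)).const_mul (s - 1 / s))
    have hEneg : E (-θ) = (E θ)⁻¹ := by
      simp only [hE]
      rw [← Complex.exp_neg]
      congr 1
      push_cast
      ring
    have hcE : (Real.cos θ : ℂ) = (E θ + (E θ)⁻¹) / 2 := by
      have h2c := Complex.two_cos (θ : ℂ)
      rw [neg_mul] at h2c
      simp only [hE]
      rw [← Complex.exp_neg, Complex.ofReal_cos, eq_div_iff (two_ne_zero' ℂ)]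
      linear_combination h2c
    have hsin2 : (Real.sin θ : ℂ) ^ 2 = 1 - (Real.cos θ : ℂ) ^ 2 := by
      have h2 : ((Real.sin θ : ℂ)) ^ 2 + ((Real.cos θ : ℂ)) ^ 2 = 1 := by
        exact_mod_cast Real.sin_sq_add_cos_sq θ
      linear_combination h2
    have h1' : 1 + s * (E θ)⁻¹ ≠ 0 := by rw [← hEneg]; exact hplus0 (-θ)
    have hEs : E θ + s ≠ 0 := by
      intro h
      apply h1'
      field_simp [hE0 θ]
      linear_combination h
    have hzs : z * s = -1 - s ^ 2 := by linear_combination hq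
    have hrel : E (-θ) * E θ = 1 := by
      simp only [hE]
      rw [← Complex.exp_add, show ((-θ : ℝ) : ℂ) * I + (θ : ℂ) * I = 0 by push_cast; ring,
        Complex.exp_zero]
    have hcos2 : 2 * (Real.cos θ : ℂ) = E θ + E (-θ) := by
      simp only [hE, Complex.ofReal_neg]
      rw [Complex.ofReal_cos]
      simpa [neg_mul] using Complex.two_cos (θ : ℂ)
    have hc2 : 2 * (Real.cos θ : ℂ) * E θ = E θ ^ 2 + 1 := by
      linear_combination E θ * hcos2 + hrel
    have hImI : (I : ℂ) * -I = 1 := by rw [mul_neg, Complex.I_mul_I, neg_neg]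
    have hIsq : (I : ℂ) * I = -1 := Complex.I_mul_I
    refine big.congr_deriv (Eq.symm ?_)
    have e1 : (1 - s ^ 2) * (I / s) * (s * (-I * E (-θ)) / (1 + s * E (-θ)))
        = (1 - s ^ 2) * E (-θ) / (1 + s * E (-θ)) := by
      have h : (1 - s ^ 2) * (I / s) * (s * (-I * E (-θ)) / (1 + s * E (-θ)))
          = (1 - s ^ 2) * (I * -I) * (s / s) * E (-θ) / (1 + s * E (-θ)) := by ring
      rw [h, hImI, div_self hs0]
      ring
    have e2 : (s - 1 / s) * (1 + I * (s * (I * E θ) / (1 + s * E θ)))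
        = (s - 1 / s) * (1 - s * E θ / (1 + s * E θ)) := by
      have h : (s - 1 / s) * (1 + I * (s * (I * E θ) / (1 + s * E θ)))
          = (s - 1 / s) * (1 + I * I * (s * E θ / (1 + s * E θ))) := by ring
      rw [h, hIsq]
      ring
    have hT1 : (1 - s ^ 2) * E (-θ) / (1 + s * E (-θ)) = (1 - s ^ 2) / (E θ + s) := by
      rw [hEneg, div_eq_div_iff h1' hEs]
      field_simp [hE0 θ]
    have hT2 : (s - 1 / s) * (1 - s * E θ / (1 + s * E θ))
        = (s ^ 2 - 1) / (s * (1 + s * E θ)) := by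
      rw [eq_div_iff (mul_ne_zero hs0 (hplus0 θ))]
      field_simp [hs0, hplus0 θ]
      ring
    have hstep1 : (1 - s ^ 2) / (E θ + s) + (s ^ 2 - 1) / (s * (1 + s * E θ))
        = -(1 - s ^ 2) ^ 2 * E θ / (s * ((E θ + s) * (1 + s * E θ))) := by
      rw [div_add_div _ _ hEs (mul_ne_zero hs0 (hplus0 θ)),
        div_eq_div_iff (mul_ne_zero hEs (mul_ne_zero hs0 (hplus0 θ)))
          (mul_ne_zero hs0 (mul_ne_zero hEs (hplus0 θ)))]
      ring
    have hfac : (E θ + s) * (1 + s * E θ) = E θ * s * (2 * (Real.cos θ : ℂ) - z) := by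
      linear_combination (-s) * hc2 + E θ * hzs
    have hfrac : (1 : ℂ) - s ^ 2 = -s * (z + 2 * s) := by linear_combination hzs
    have hlast : -(1 - s ^ 2) ^ 2 * E θ / (s * (E θ * s * (2 * (Real.cos θ : ℂ) - z)))
        = -(z + 2 * s) ^ 2 / (2 * (Real.cos θ : ℂ) - z) := by
      rw [hfrac, div_eq_div_iff
        (mul_ne_zero hs0 (mul_ne_zero (mul_ne_zero (hE0 θ) hs0) (hcosz θ))) (hcosz θ)]
      ring
    rw [e1, e2, hT1, hT2, add_assoc, hstep1, hfac, hlast]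
    simp only [hF]
    rw [hsin2, div_eq_iff (hcosz θ)]
    have expand : (-2 * (Real.cos θ : ℂ) - z * 1 + -(z + 2 * s) ^ 2 / (2 * (Real.cos θ : ℂ) - z))
        * (2 * (Real.cos θ : ℂ) - z)
        = (-2 * (Real.cos θ : ℂ) - z) * (2 * (Real.cos θ : ℂ) - z) - (z + 2 * s) ^ 2 := by
      rw [add_mul, div_mul_cancel₀ _ (hcosz θ)]
      ring
    rw [expand]
    linear_combination 4 * hzs
  have hFcont : Continuous F := by
    apply Continuous.div
    · exact continuous_const.mul ((Complex.continuous_ofReal.comp Real.continuous_sin).pow 2)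
    · exact (continuous_const.mul (Complex.continuous_ofReal.comp Real.continuous_cos)).sub
        continuous_const
    · exact hcosz
  have hFTC : (∫ θ in (0:ℝ)..Real.pi, F θ) = H Real.pi - H 0 :=
    intervalIntegral.integral_eq_sub_of_hasDerivAt (fun θ _ => hderivH θ)
      (hFcont.intervalIntegrable _ _)
  have hEpi : E Real.pi = -1 := Complex.exp_pi_mul_I
  have hEnegpi : E (-Real.pi) = -1 := by
    simp only [hE]
    push_cast
    rw [neg_mul, Complex.exp_neg, Complex.exp_pi_mul_I]
    norm_num
  have hE00 : E 0 = 1 := by simp [hE]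
  have hHval : H Real.pi - H 0 = 2 * Real.pi * s := by
    simp only [hH, hEpi, hEnegpi, neg_zero, hE00, Real.sin_pi, Real.sin_zero]
    push_cast
    field_simp
    linear_combination (-(Real.pi : ℂ)) * hq
  have hcongr : ∀ θ ∈ Set.uIcc (0:ℝ) Real.pi,
      (-2 * Real.sin θ) • ρ (2 * Real.cos θ) = -(1 / (2 * (Real.pi : ℂ))) * F θ := by
    intro θ hθ
    rw [Set.uIcc_of_le Real.pi_pos.le] at hθ
    have hsn : 0 ≤ Real.sin θ := Real.sin_nonneg_of_nonneg_of_le_pi hθ.1 hθ.2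
    have hsq : Real.sqrt (4 - (2 * Real.cos θ) ^ 2) = 2 * Real.sin θ := by
      rw [show 4 - (2 * Real.cos θ) ^ 2 = (2 * Real.sin θ) ^ 2 by
        nlinarith [Real.sin_sq_add_cos_sq θ]]
      exact Real.sqrt_sq (by positivity)
    simp only [hρ, hF, hsq]
    rw [Complex.real_smul]
    push_cast
    field_simp [hπ, hcosz θ]
    ring
  have hIcong : (∫ θ in (0:ℝ)..Real.pi, (-2 * Real.sin θ) • ρ (2 * Real.cos θ))
      = -(1 / (2 * (Real.pi : ℂ))) * (2 * Real.pi * s) := by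
    rw [intervalIntegral.integral_congr hcongr, intervalIntegral.integral_const_mul, hFTC, hHval]
  have hsymm : (∫ x in (2:ℝ)..(-2), ρ x) = -∫ x in (-2:ℝ)..2, ρ x :=
    intervalIntegral.integral_symm (-2) 2
  have final := hIcong.symm.trans (hsubst.trans hsymm)
  have hval : -(1 / (2 * (Real.pi : ℂ))) * (2 * Real.pi * s) = -s := by
    field_simp
  rw [hval] at final
  exact (neg_inj.mp final).symm

/-- The Stieltjes transform of the semicircle law satisfies `m(z) = -1/(z + m(z))`
on the upper half plane. -/
theorem semicircle_stieltjes_eq (z : ℂ) (hz : 0 < z.im) (m : ℂ)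
    (hm : m = ∫ x in (-2:ℝ)..2,
      ((Real.sqrt (4 - x ^ 2) / (2 * Real.pi) : ℝ) : ℂ) / ((x : ℂ) - z)) :
    m = -1 / (z + m) := by
  obtain ⟨s, hq, hs1⟩ := exists_small_root z hz
  have hms : m = s := by rw [hm]; exact semicircle_integral z s hz hq hs1
  have hzm : z + s ≠ 0 := by
    intro h
    have h1 : (1 : ℂ) = 0 := by linear_combination hq - s * h
    exact one_ne_zero h1
  rw [hms, eq_div_iff hzm]
  linear_combination hq
end

section
/- Let B be an n×n Hermitian matrix, z = u+iv with v > 0, and B₁ the principal submatrix obtained by deleting the first row and column. Then |tr((B−zI_n)^{-1}) − tr((B₁−zI_{n−1})^{-1})| ≤ 1/v. -/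
open Matrix

namespace ResAux

variable {m : Type*} [Fintype m] [DecidableEq m]

lemma smul_one_eq_diagonal' (z : ℂ) : z • (1 : Matrix m m ℂ) = diagonal (fun _ => z) := by
  ext i j; by_cases h : i = j <;> simp [h, one_apply, diagonal]

lemma spec_resolvent (C : Matrix m m ℂ) (hC : C.IsHermitian) (z : ℂ) :
    C - z • 1 = (hC.eigenvectorUnitary : Matrix m m ℂ) *
      diagonal (fun k => (hC.eigenvalues k : ℂ) - z) *
      star (hC.eigenvectorUnitary : Matrix m m ℂ) := by
  set U : Matrix m m ℂ := (hC.eigenvectorUnitary : Matrix m m ℂ) with hUdef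
  have hU1 : U * star U = 1 := Matrix.mem_unitaryGroup_iff.mp hC.eigenvectorUnitary.2
  have hd : diagonal (fun k => (hC.eigenvalues k : ℂ) - z)
      = diagonal (RCLike.ofReal ∘ hC.eigenvalues) - diagonal (fun _ => z) := by
    rw [diagonal_sub]; rfl
  have hz1 : U * diagonal (fun _ : m => z) * star U = z • 1 := by
    rw [← smul_one_eq_diagonal' z, Matrix.mul_smul, Matrix.mul_one, Matrix.smul_mul, hU1]
  rw [hd, Matrix.mul_sub, Matrix.sub_mul, hz1]
  congr 1
  exact hC.spectral_theorem.trans (Unitary.conjStarAlgAut_apply _ _)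

lemma sandwich_mul (C : Matrix m m ℂ) (hC : C.IsHermitian) (g₁ g₂ : m → ℂ) :
    ((hC.eigenvectorUnitary : Matrix m m ℂ) * diagonal g₁ *
        star (hC.eigenvectorUnitary : Matrix m m ℂ)) *
      ((hC.eigenvectorUnitary : Matrix m m ℂ) * diagonal g₂ *
        star (hC.eigenvectorUnitary : Matrix m m ℂ))
    = (hC.eigenvectorUnitary : Matrix m m ℂ) * diagonal (fun k => g₁ k * g₂ k) *
        star (hC.eigenvectorUnitary : Matrix m m ℂ) := by
  set U : Matrix m m ℂ := (hC.eigenvectorUnitary : Matrix m m ℂ) with hUdef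
  have hU2 : star U * U = 1 := Matrix.mem_unitaryGroup_iff'.mp hC.eigenvectorUnitary.2
  calc U * diagonal g₁ * star U * (U * diagonal g₂ * star U)
      = U * diagonal g₁ * (star U * U) * diagonal g₂ * star U := by
        simp only [Matrix.mul_assoc]
    _ = U * (diagonal g₁ * diagonal g₂) * star U := by
        rw [hU2, Matrix.mul_one]; simp only [Matrix.mul_assoc]
    _ = _ := by rw [diagonal_mul_diagonal]

lemma resolvent_inv (C : Matrix m m ℂ) (hC : C.IsHermitian) (z : ℂ) (hz : z.im ≠ 0) :
    (C - z • 1) * ((hC.eigenvectorUnitary : Matrix m m ℂ) *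
      diagonal (fun k => ((hC.eigenvalues k : ℂ) - z)⁻¹) *
      star (hC.eigenvectorUnitary : Matrix m m ℂ)) = 1 := by
  set U : Matrix m m ℂ := (hC.eigenvectorUnitary : Matrix m m ℂ) with hUdef
  have hU1 : U * star U = 1 := Matrix.mem_unitaryGroup_iff.mp hC.eigenvectorUnitary.2
  have hf : ∀ k, ((hC.eigenvalues k : ℂ) - z) ≠ 0 := by
    intro k h
    apply hz
    have := congrArg Complex.im h
    simpa using this.symm
  rw [spec_resolvent C hC z, sandwich_mul]
  have : (fun k => ((hC.eigenvalues k : ℂ) - z) * ((hC.eigenvalues k : ℂ) - z)⁻¹)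
      = fun _ => (1:ℂ) := by
    funext k; exact mul_inv_cancel₀ (hf k)
  rw [this, diagonal_one, Matrix.mul_one, hU1]

lemma entry_quad (X : Matrix m m ℂ) (a : m → ℂ)
    (Cr : Matrix PUnit m ℂ) (Br : Matrix m PUnit ℂ)
    (hCr : ∀ j, Cr PUnit.unit j = star (a j)) (hBr : ∀ j, Br j PUnit.unit = a j) :
    (Cr * X * Br) PUnit.unit PUnit.unit = star a ⬝ᵥ (X *ᵥ a) := by
  rw [Matrix.mul_assoc]
  simp only [mul_apply, dotProduct, mulVec, hCr, hBr, Pi.star_apply]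

lemma quad_diag (U : Matrix m m ℂ) (g : m → ℂ) (a : m → ℂ) :
    star a ⬝ᵥ ((U * diagonal g * star U) *ᵥ a)
      = ∑ k, g k * ((Complex.normSq ((star U *ᵥ a) k)) : ℂ) := by
  set w : m → ℂ := star U *ᵥ a with hw
  have h1 : star a ᵥ* U = star w := by
    rw [hw, star_mulVec]
    simp [star_eq_conjTranspose]
  rw [← Matrix.mulVec_mulVec, ← Matrix.mulVec_mulVec, dotProduct_mulVec, h1]
  simp only [dotProduct, mulVec_diagonal, Pi.star_apply]
  refine Finset.sum_congr rfl fun k _ => ?_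
  have h2 : (starRingEnd ℂ) (w k) * (g k * w k) = g k * (w k * (starRingEnd ℂ) (w k)) := by ring
  simpa [RCLike.star_def, Complex.mul_conj] using h2.trans (by rw [Complex.mul_conj])

lemma trace_fromBlocks' {l : Type*} [Fintype l] (A : Matrix l l ℂ) (Bm : Matrix l m ℂ)
    (Cm : Matrix m l ℂ) (D : Matrix m m ℂ) :
    (fromBlocks A Bm Cm D).trace = A.trace + D.trace := by
  simp [Matrix.trace, Fintype.sum_sum_type, fromBlocks, Matrix.diag]

lemma trace_submatrix' {l : Type*} [Fintype l] (e : l ≃ m) (A : Matrix m m ℂ) :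
    (A.submatrix e e).trace = A.trace := by
  show ∑ i, A.submatrix e e i i = ∑ i, A i i
  exact Equiv.sum_comp e fun i => A i i

lemma trace_punit (M : Matrix PUnit PUnit ℂ) : M.trace = M PUnit.unit PUnit.unit := by
  simp [Matrix.trace]

noncomputable def punitInvertible (M : Matrix PUnit PUnit ℂ)
    (h : M PUnit.unit PUnit.unit ≠ 0) : Invertible M :=
  invertibleOfRightInverse _ (Matrix.of fun _ _ => (M PUnit.unit PUnit.unit)⁻¹) (by
    ext i j
    simp only [mul_apply, Finset.univ_unique, Finset.sum_singleton, of_apply, one_apply]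
    cases i; cases j
    simp [mul_inv_cancel₀ h])

end ResAux

/-- Interlacing-type bound: for a Hermitian matrix `B` and the principal
submatrix `B₁` obtained by deleting the first row and column,
`|tr((B−zI)⁻¹) − tr((B₁−zI)⁻¹)| ≤ 1 / Im z`. -/
theorem abs_trace_resolvent_sub_trace_resolvent_submatrix_le {n : ℕ}
    (B : Matrix (Fin (n + 1)) (Fin (n + 1)) ℂ) (hB : B.IsHermitian)
    (z : ℂ) (hz : 0 < z.im) :
    ‖((B - z • 1)⁻¹).trace
        - (((B.submatrix Fin.succ Fin.succ - z • 1 : Matrix (Fin n) (Fin n) ℂ))⁻¹).trace‖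
      ≤ 1 / z.im := by
  classical
  have hzne : z.im ≠ 0 := ne_of_gt hz
  set C : Matrix (Fin n) (Fin n) ℂ := B.submatrix Fin.succ Fin.succ with hCdef
  have hC : C.IsHermitian := hB.submatrix _
  set U : Matrix (Fin n) (Fin n) ℂ := (hC.eigenvectorUnitary : Matrix (Fin n) (Fin n) ℂ)
    with hUdef
  set f : Fin n → ℂ := fun k => (hC.eigenvalues k : ℂ) - z with hfdef
  set a : Fin n → ℂ := fun i => B i.succ 0 with hadef
  set Br : Matrix (Fin n) Unit ℂ := Matrix.of fun j _ => a j with hBrdef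
  set Cr : Matrix Unit (Fin n) ℂ := Matrix.of fun _ j => star (a j) with hCrdef
  set Dm : Matrix Unit Unit ℂ := Matrix.of fun _ _ => B 0 0 - z with hDmdef
  set A : Matrix (Fin n) (Fin n) ℂ := C - z • 1 with hAdef
  -- invertibility of A and formula for A⁻¹
  have hrinv := ResAux.resolvent_inv C hC z hzne
  letI iA : Invertible A := invertibleOfRightInverse _ _ hrinv
  have hAinv : A⁻¹ = U * diagonal (fun k => (f k)⁻¹) * star U := inv_eq_right_inv hrinv
  -- the index equivalence
  set e : Fin n ⊕ Unit ≃ Fin (n + 1) :=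
    ((finSuccEquiv n).trans (Equiv.optionEquivSumPUnit _)).symm with hedef
  have he1 : ∀ i : Fin n, e (Sum.inl i) = i.succ := by
    intro i; simp [hedef]
  have he2 : ∀ u : Unit, e (Sum.inr u) = 0 := by
    intro u; simp [hedef]
  -- block decomposition
  have hblock : (B - z • 1).submatrix e e = fromBlocks A Br Cr Dm := by
    ext i j
    cases i with
    | inl i =>
      cases j with
      | inl j =>
        simp [submatrix_apply, he1, hAdef, hCdef, one_apply, Fin.succ_inj]
      | inr j =>
        simp [submatrix_apply, he1, he2, hBrdef, hadef, one_apply,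
          Fin.succ_ne_zero i]
    | inr i =>
      cases j with
      | inl j =>
        have hherm : star (B j.succ 0) = B 0 j.succ := hB.apply 0 j.succ
        simp [submatrix_apply, he1, he2, hCrdef, hadef, one_apply,
          (Fin.succ_ne_zero j).symm, ← hherm]
      | inr j =>
        simp [submatrix_apply, he2, hDmdef, one_apply]
  -- quadratic forms
  set w : Fin n → ℂ := star U *ᵥ a with hwdef
  set t : Fin n → ℝ := fun k => Complex.normSq (w k) with htdef
  set S : ℝ := ∑ k, t k / Complex.normSq (f k) with hSdef
  have hQ1 : (Cr * A⁻¹ * Br) () () = ∑ k, (f k)⁻¹ * (t k : ℂ) := by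
    rw [ResAux.entry_quad A⁻¹ a Cr Br (fun j => rfl) (fun j => rfl), hAinv,
      ResAux.quad_diag]
  have hQ2m : A⁻¹ * A⁻¹ = U * diagonal (fun k => (f k)⁻¹ * (f k)⁻¹) * star U := by
    rw [hAinv, ResAux.sandwich_mul]
  have hQ2 : (Cr * (A⁻¹ * A⁻¹) * Br) () ()
      = ∑ k, ((f k)⁻¹ * (f k)⁻¹) * (t k : ℂ) := by
    rw [ResAux.entry_quad (A⁻¹ * A⁻¹) a Cr Br (fun j => rfl) (fun j => rfl), hQ2m,
      ResAux.quad_diag]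
  set Q2 : ℂ := (Cr * (A⁻¹ * A⁻¹) * Br) () () with hQ2def
  -- the Schur complement scalar
  set Sm : Matrix Unit Unit ℂ := Dm - Cr * ⅟A * Br with hSmdef
  set d : ℂ := Sm () () with hddef
  have hd : d = (B 0 0 - z) - ∑ k, (f k)⁻¹ * (t k : ℂ) := by
    rw [hddef, hSmdef]
    simp only [Matrix.sub_apply, hDmdef, Matrix.of_apply, invOf_eq_nonsing_inv]
    rw [hQ1]
  -- imaginary part computations
  have hB00 : (B 0 0).im = 0 := by
    have h1 : star (B 0 0) = B 0 0 := hB.apply 0 0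
    have h2 := congrArg Complex.im h1
    simp only [RCLike.star_def, Complex.conj_im] at h2
    linarith
  have hfim : ∀ k, (f k).im = -z.im := by
    intro k; simp [hfdef]
  have hfre : ∀ k, Complex.normSq (f k) ≠ 0 := by
    intro k h
    rw [Complex.normSq_eq_zero] at h
    have := congrArg Complex.im h
    rw [hfim k] at this
    simp at this
    exact hzne this
  have hQ1im : (∑ k, (f k)⁻¹ * (t k : ℂ)).im = z.im * S := by
    rw [Complex.im_sum, hSdef, Finset.mul_sum]
    refine Finset.sum_congr rfl fun k _ => ?_
    rw [Complex.mul_im]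
    simp only [Complex.ofReal_im, Complex.ofReal_re, mul_zero, zero_add]
    rw [Complex.inv_im, hfim k]
    field_simp
  have htnn : ∀ k, 0 ≤ t k := fun k => Complex.normSq_nonneg _
  have hSnn : 0 ≤ S := Finset.sum_nonneg fun k _ =>
    div_nonneg (htnn k) (Complex.normSq_nonneg _)
  have hdim : d.im = -(z.im * (1 + S)) := by
    rw [hd]
    rw [Complex.sub_im, Complex.sub_im, hB00, hQ1im]
    ring
  have hdne : d ≠ 0 := by
    intro h
    rw [h] at hdim
    simp only [Complex.zero_im] at hdim
    nlinarith
  -- invertibility of the block matrix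
  letI iS : Invertible Sm := ResAux.punitInvertible Sm hdne
  letI iM : Invertible (fromBlocks A Br Cr Dm) :=
    Matrix.fromBlocks₁₁Invertible A Br Cr Dm
  have hSminv : ⅟Sm = Matrix.of fun _ _ => d⁻¹ := rfl
  -- inverse of the block matrix
  have hMinv : (fromBlocks A Br Cr Dm)⁻¹
      = fromBlocks (⅟A + ⅟A * Br * ⅟Sm * Cr * ⅟A) (-(⅟A * Br * ⅟Sm))
          (-(⅟Sm * Cr * ⅟A)) (⅟Sm) := by
    rw [← invOf_eq_nonsing_inv, Matrix.invOf_fromBlocks₁₁_eq]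
  -- trace computations
  have htrX : (⅟A * Br * ⅟Sm * Cr * ⅟A).trace = d⁻¹ * Q2 := by
    have h1 : (⅟A * Br * ⅟Sm * Cr * ⅟A).trace
        = ((⅟Sm * Cr * ⅟A) * (⅟A * Br)).trace := by
      rw [show (⅟A * Br * ⅟Sm * Cr * ⅟A : Matrix (Fin n) (Fin n) ℂ)
          = (⅟A * Br) * (⅟Sm * Cr * ⅟A) by simp only [Matrix.mul_assoc]]
      exact Matrix.trace_mul_comm _ _
    rw [h1, ResAux.trace_punit]
    have h2 : ((⅟Sm * Cr * ⅟A) * (⅟A * Br) : Matrix Unit Unit ℂ)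
        = ⅟Sm * (Cr * (A⁻¹ * A⁻¹) * Br) := by
      simp only [invOf_eq_nonsing_inv, Matrix.mul_assoc]
    rw [h2, Matrix.mul_apply]
    simp only [Finset.univ_unique, Finset.sum_singleton, hSminv, Matrix.of_apply]
    rfl
  have key : ((B - z • 1)⁻¹).trace - (A⁻¹).trace = d⁻¹ * (1 + Q2) := by
    have h0 : ((B - z • 1)⁻¹).trace = (((B - z • 1).submatrix e e)⁻¹).trace := by
      rw [Matrix.inv_submatrix_equiv, ResAux.trace_submatrix']
    rw [h0, hblock, hMinv, ResAux.trace_fromBlocks', Matrix.trace_add, htrX,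
      invOf_eq_nonsing_inv, hSminv, ResAux.trace_punit]
    simp only [Matrix.of_apply]
    ring
  rw [key]
  -- norm bounds
  have hfnz : ∀ k, f k ≠ 0 := by
    intro k h
    exact hfre k (by rw [h]; simp)
  have hnormf : ∀ k, ‖(f k)⁻¹ * (f k)⁻¹ * (t k : ℂ)‖ = t k / Complex.normSq (f k) := by
    intro k
    have h3 : Complex.normSq (f k) = ‖f k‖ * ‖f k‖ := by
      rw [Complex.normSq_eq_norm_sq, sq]
    have h4 : ‖f k‖ ≠ 0 := norm_ne_zero_iff.mpr (hfnz k)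
    rw [norm_mul, norm_mul, norm_inv, Complex.norm_real,
      Real.norm_of_nonneg (htnn k), h3]
    field_simp
  have h1 : ‖(1 : ℂ) + Q2‖ ≤ 1 + S := by
    calc ‖(1 : ℂ) + Q2‖ ≤ ‖(1:ℂ)‖ + ‖Q2‖ := norm_add_le _ _
      _ ≤ 1 + S := by
        rw [norm_one]
        refine add_le_add_right ?_ 1
        rw [hQ2]
        calc ‖∑ k, (f k)⁻¹ * (f k)⁻¹ * (t k : ℂ)‖
            ≤ ∑ k, ‖(f k)⁻¹ * (f k)⁻¹ * (t k : ℂ)‖ := norm_sum_le _ _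
          _ = S := by
            rw [hSdef]
            exact Finset.sum_congr rfl fun k _ => hnormf k
  have hpos : 0 < z.im * (1 + S) := by nlinarith
  have h2 : z.im * (1 + S) ≤ ‖d‖ := by
    have ha : z.im * (1 + S) = |d.im| := by
      rw [hdim, abs_neg, abs_of_pos hpos]
    rw [ha]
    exact Complex.abs_im_le_norm d
  calc ‖d⁻¹ * (1 + Q2)‖ = ‖(1:ℂ) + Q2‖ / ‖d‖ := by
        rw [norm_mul, norm_inv]
        rw [div_eq_inv_mul]
    _ ≤ (1 + S) / (z.im * (1 + S)) := by
        have hSnn' : (0:ℝ) ≤ 1 + S := by linarith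
        exact div_le_div₀ hSnn' h1 hpos h2
    _ = 1 / z.im := by
        have h5 : (1 + S : ℝ) ≠ 0 := ne_of_gt (by linarith)
        rw [mul_comm, ← div_div, div_self h5]
end
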